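/- arXiv:1401.0171 — 2 statements merged into one kernel-verified Lean document; each statement's English description precedes it below -/
import Mathlib

section
/- Let B be a bipartite graph with parts 𝓡 and W that has a matching saturating 𝓡, let C ⊆ W be the maximal essential subset of W, and let p ∈ C and s ∈ W \ C. Then the singleton {p} is essential in B if and only if {p} is essential in B − s (the graph obtained by deleting the vertex s). -/
noncomputable section

attribute [local instance] Classical.propDecidable

variable {ρ ω : Type*}

/-- The neighborhood of a set `U` of left vertices in the bipartite graph
with edge set `E`. -/
def bNbhd (E : Finset (ρ × ω)) (U : Finset ρ) : Finset ω :=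
  (E.filter fun p => p.1 ∈ U).image Prod.snd

/-- `C` is an essential subset of the right side: `C = N(U)` for some
`U ⊆ Rset` with `|U| = |C|`. -/
def bEssential (Rset : Finset ρ) (E : Finset (ρ × ω)) (C : Finset ω) : Prop :=
  ∃ U ⊆ Rset, U.card = C.card ∧ bNbhd E U = C

/-- The bipartite graph with edge set `E` has a matching saturating `Rset`. -/
def SaturatesR (Rset : Finset ρ) (E : Finset (ρ × ω)) : Prop :=
  ∃ f : ρ → ω, Set.InjOn f ↑Rset ∧ ∀ r ∈ Rset, (r, f r) ∈ E

lemma mem_bNbhd {E : Finset (ρ × ω)} {U : Finset ρ} {w : ω} :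
    w ∈ bNbhd E U ↔ ∃ r ∈ U, (r, w) ∈ E := by
  simp only [bNbhd, Finset.mem_image, Finset.mem_filter, Prod.exists]
  constructor
  · rintro ⟨a, b, ⟨hab, ha⟩, rfl⟩; exact ⟨a, ha, hab⟩
  · rintro ⟨a, ha, hab⟩; exact ⟨a, w, ⟨hab, ha⟩, rfl⟩

lemma bNbhd_subset {E E' : Finset (ρ × ω)} (h : E' ⊆ E) (U : Finset ρ) :
    bNbhd E' U ⊆ bNbhd E U := by
  intro w hw
  rw [mem_bNbhd] at hw ⊢
  obtain ⟨r, hr, he⟩ := hw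
  exact ⟨r, hr, h he⟩

lemma bNbhd_mono {E : Finset (ρ × ω)} {U V : Finset ρ} (h : U ⊆ V) :
    bNbhd E U ⊆ bNbhd E V := by
  intro w hw
  rw [mem_bNbhd] at hw ⊢
  obtain ⟨r, hr, he⟩ := hw
  exact ⟨r, h hr, he⟩

lemma bNbhd_insert (E : Finset (ρ × ω)) (r : ρ) (U : Finset ρ) :
    bNbhd E (insert r U) = bNbhd E {r} ∪ bNbhd E U := by
  ext w
  simp only [mem_bNbhd, Finset.mem_union, Finset.mem_insert, Finset.mem_singleton]
  constructor
  · rintro ⟨a, (rfl | ha), he⟩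
    · exact Or.inl ⟨a, rfl, he⟩
    · exact Or.inr ⟨a, ha, he⟩
  · rintro (⟨a, rfl, he⟩ | ⟨a, ha, he⟩)
    · exact ⟨a, Or.inl rfl, he⟩
    · exact ⟨a, Or.inr ha, he⟩

/-- Let `C` be the maximal essential subset of `Wset`, `p ∈ C` and
`s ∈ Wset \ C`. Then `{p}` is essential in `B` iff `{p}` is essential in
`B − s`. -/
theorem essential_singleton_iff_of_delete_superfluous
    (Rset : Finset ρ) (Wset : Finset ω) (E : Finset (ρ × ω))
    (hE : ∀ p ∈ E, p.1 ∈ Rset ∧ p.2 ∈ Wset)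
    (hsat : SaturatesR Rset E)
    (C : Finset ω) (hCess : bEssential Rset E C)
    (hCmax : ∀ C', bEssential Rset E C' → C' ⊆ C)
    (p : ω) (hp : p ∈ C)
    (s : ω) (hsW : s ∈ Wset) (hsC : s ∉ C) :
    bEssential Rset E {p} ↔
      bEssential Rset (E.filter fun q => q.2 ≠ s) {p} := by
  have hps : p ≠ s := fun h => hsC (h ▸ hp)
  constructor
  · rintro ⟨U, hU, hcard, hN⟩
    refine ⟨U, hU, hcard, ?_⟩
    apply Finset.Subset.antisymm
    · intro w hw
      have := bNbhd_subset (Finset.filter_subset _ E) U hw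
      rwa [hN] at this
    · intro w hw
      rw [Finset.mem_singleton] at hw
      subst hw
      have hp' : w ∈ bNbhd E U := by rw [hN]; exact Finset.mem_singleton_self w
      rw [mem_bNbhd] at hp' ⊢
      obtain ⟨r, hr, he⟩ := hp'
      exact ⟨r, hr, Finset.mem_filter.2 ⟨he, hps⟩⟩
  · rintro ⟨U, hU, hcard, hN⟩
    rw [Finset.card_singleton] at hcard
    obtain ⟨r, rfl⟩ := Finset.card_eq_one.1 hcard
    have hrR : r ∈ Rset := hU (Finset.mem_singleton_self r)
    -- neighbors of r in E are contained in {p, s}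
    have hsub : bNbhd E {r} ⊆ {p, s} := by
      intro w hw
      rw [mem_bNbhd] at hw
      obtain ⟨a, ha, he⟩ := hw
      by_cases hws : w = s
      · simp [hws]
      · have : w ∈ bNbhd (E.filter fun q => q.2 ≠ s) {r} := by
          rw [mem_bNbhd]
          exact ⟨a, ha, Finset.mem_filter.2 ⟨he, hws⟩⟩
        rw [hN, Finset.mem_singleton] at this
        simp [this]
    have hpmem : p ∈ bNbhd E {r} := by
      have : p ∈ bNbhd (E.filter fun q => q.2 ≠ s) {r} := by
        rw [hN]; exact Finset.mem_singleton_self p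
      exact bNbhd_subset (Finset.filter_subset _ E) {r} this
    -- s is not a neighbor of r in E
    have hsnot : s ∉ bNbhd E {r} := by
      intro hs
      obtain ⟨U0, hU0, hU0card, hU0N⟩ := hCess
      by_cases hrU0 : r ∈ U0
      · have : s ∈ C := by
          rw [← hU0N]
          exact bNbhd_mono (Finset.singleton_subset_iff.2 hrU0) hs
        exact hsC this
      · have hess : bEssential Rset E (insert s C) := by
          refine ⟨insert r U0, ?_, ?_, ?_⟩
          · intro x hx
            rcases Finset.mem_insert.1 hx with rfl | hx
            · exact hrR
            · exact hU0 hx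
          · rw [Finset.card_insert_of_notMem hrU0,
              Finset.card_insert_of_notMem hsC, hU0card]
          · rw [bNbhd_insert, hU0N]
            apply Finset.Subset.antisymm
            · intro w hw
              rcases Finset.mem_union.1 hw with hw | hw
              · rcases Finset.mem_insert.1 (hsub hw) with rfl | hw'
                · exact Finset.mem_insert_of_mem hp
                · rw [Finset.mem_singleton] at hw'
                  subst hw'
                  exact Finset.mem_insert_self _ _
              · exact Finset.mem_insert_of_mem hw
            · intro w hw
              rcases Finset.mem_insert.1 hw with rfl | hw
              · exact Finset.mem_union_left _ hs
              · exact Finset.mem_union_right _ hw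
        exact hsC (hCmax _ hess (Finset.mem_insert_self s C))
    refine ⟨{r}, hU, by simp, ?_⟩
    apply Finset.Subset.antisymm
    · intro w hw
      rcases Finset.mem_insert.1 (hsub hw) with rfl | hw'
      · exact Finset.mem_singleton_self w
      · rw [Finset.mem_singleton] at hw'
        subst hw'
        exact absurd hw hsnot
    · intro w hw
      rw [Finset.mem_singleton] at hw
      subst hw
      exact hpmem
end
end

section
/- (Monster lemma.) Let H be a 3-partite 3-graph that has a matchable FR-partition (𝓕, 𝓡, W), and let a, b, c ∈ V(H) lie in three different vertex classes. Suppose that (1) for every F ∈ 𝓕 there is an F-edge avoiding {a, b, c}, and (2) for every R ∈ 𝓡 there is an R-edge avoiding {a, b, c}. Then ν(H − {a, b, c}) = ν(H). -/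
noncomputable section

attribute [local instance] Classical.propDecidable

universe u

variable {α : Type u}

/-- A 3-partite 3-uniform multihypergraph: vertex classes `V1, V2, V3` and a
multiset of edges, each edge being a triple with one vertex in each class
(parallel edges are allowed via multiplicities). -/
structure TriSys (α : Type u) where
  V1 : Finset α
  V2 : Finset α
  V3 : Finset α
  h12 : Disjoint V1 V2
  h13 : Disjoint V1 V3
  h23 : Disjoint V2 V3
  edges : Multiset (α × α × α)
  mem1 : ∀ e ∈ edges, e.1 ∈ V1
  mem2 : ∀ e ∈ edges, e.2.1 ∈ V2
  mem3 : ∀ e ∈ edges, e.2.2 ∈ V3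

/-- The vertex set of an edge. -/
def evset (e : α × α × α) : Finset α := {e.1, e.2.1, e.2.2}

/-- The coordinates of an edge, indexed by `Fin 3`. -/
def ecoord (e : α × α × α) : Fin 3 → α := ![e.1, e.2.1, e.2.2]

namespace TriSys

def verts (H : TriSys α) : Finset α := H.V1 ∪ H.V2 ∪ H.V3

/-- The vertex classes, indexed by `Fin 3`. -/
def cls (H : TriSys α) : Fin 3 → Finset α := ![H.V1, H.V2, H.V3]

/-- A matching: a set of (pairwise vertex-disjoint) edges. -/
def IsMatching (H : TriSys α) (M : Finset (α × α × α)) : Prop :=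
  (∀ e ∈ M, e ∈ H.edges) ∧
  (↑M : Set (α × α × α)).Pairwise fun e f => Disjoint (evset e) (evset f)

/-- The matching number ν. -/
def nu (H : TriSys α) : ℕ :=
  sSup {n : ℕ | ∃ M : Finset (α × α × α), H.IsMatching M ∧ M.card = n}

/-- A vertex cover: a set of vertices meeting every edge. -/
def IsCover (H : TriSys α) (T : Finset α) : Prop :=
  ∀ e ∈ H.edges, ∃ v ∈ T, v ∈ evset e

/-- The vertex cover number τ. -/
def tau (H : TriSys α) : ℕ :=
  sInf {n : ℕ | ∃ T : Finset α, H.IsCover T ∧ T.card = n}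

/-- Deletion of a set of vertices (and all edges meeting it). -/
def delete (H : TriSys α) (S : Finset α) : TriSys α where
  V1 := H.V1 \ S
  V2 := H.V2 \ S
  V3 := H.V3 \ S
  h12 := H.h12.mono Finset.sdiff_subset Finset.sdiff_subset
  h13 := H.h13.mono Finset.sdiff_subset Finset.sdiff_subset
  h23 := H.h23.mono Finset.sdiff_subset Finset.sdiff_subset
  edges := H.edges.filter fun e => e.1 ∉ S ∧ e.2.1 ∉ S ∧ e.2.2 ∉ S
  mem1 := fun e he => by
    rw [Multiset.mem_filter] at he
    exact Finset.mem_sdiff.mpr ⟨H.mem1 e he.1, he.2.1⟩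
  mem2 := fun e he => by
    rw [Multiset.mem_filter] at he
    exact Finset.mem_sdiff.mpr ⟨H.mem2 e he.1, he.2.2.1⟩
  mem3 := fun e he => by
    rw [Multiset.mem_filter] at he
    exact Finset.mem_sdiff.mpr ⟨H.mem3 e he.1, he.2.2.2⟩

end TriSys

/-- The four edges of a truncated Fano plane on vertices `a,b,c,x,y,z`
(with classes `{a,x} ⊆ V1`, `{b,y} ⊆ V2`, `{c,z} ⊆ V3`). -/
def FanoEdges (a b c x y z : α) : Finset (α × α × α) :=
  {(a, b, c), (a, y, z), (x, b, z), (x, y, c)}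

/-- The supports of the edges of `H` induced on a vertex subset `F`. -/
def inducedEdges (H : TriSys α) (F : Finset α) : Finset (α × α × α) :=
  (H.edges.filter fun e => evset e ⊆ F).toFinset

/-- `H` induces a truncated multi-Fano plane on the six-element set `F`. -/
def IsMultiFano (H : TriSys α) (F : Finset α) : Prop :=
  ∃ a b c x y z : α,
    a ∈ H.V1 ∧ x ∈ H.V1 ∧ b ∈ H.V2 ∧ y ∈ H.V2 ∧ c ∈ H.V3 ∧ z ∈ H.V3 ∧
    a ≠ x ∧ b ≠ y ∧ c ≠ z ∧
    F = {a, b, c, x, y, z} ∧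
    inducedEdges H F = FanoEdges a b c x y z

/-- The data of an FR-partition: the families `𝓕` and `𝓡` and the set `W`. -/
structure FRData (α : Type u) where
  Ffam : Finset (Finset α)
  Rfam : Finset (Finset α)
  W : Finset α

/-- The union of the members of a family of sets. -/
def famUnion (G : Finset (Finset α)) : Finset α := G.biUnion id

/-- `(𝓕, 𝓡, W)` is an FR-partition of `H`. -/
def IsFRPartition (H : TriSys α) (P : FRData α) : Prop :=
  (∀ A ∈ P.Ffam, ∀ B ∈ P.Ffam, A ≠ B → Disjoint A B) ∧
  (∀ A ∈ P.Rfam, ∀ B ∈ P.Rfam, A ≠ B → Disjoint A B) ∧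
  (∀ A ∈ P.Ffam, ∀ B ∈ P.Rfam, Disjoint A B) ∧
  (∀ A ∈ P.Ffam, Disjoint A P.W) ∧
  (∀ B ∈ P.Rfam, Disjoint B P.W) ∧
  famUnion P.Ffam ∪ famUnion P.Rfam ∪ P.W = H.verts ∧
  (∀ A ∈ P.Ffam, IsMultiFano H A) ∧
  (∀ B ∈ P.Rfam, ∃ r1 ∈ H.V1, ∃ r2 ∈ H.V2, ∃ r3 ∈ H.V3, B = {r1, r2, r3}) ∧
  P.Ffam.card + P.Rfam.card = H.nu

/-- `w` is joined to `R` in the auxiliary bipartite graph `B_i`: some edge of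
`H` contains `w` and two vertices of `R`. -/
def RAdj (H : TriSys α) (R : Finset α) (w : α) : Prop :=
  ∃ e ∈ H.edges, w ∈ evset e ∧ 2 ≤ (evset e ∩ R).card

/-- The auxiliary bipartite graph on `Rfam` and `Wi` has a matching
saturating `Rfam`. -/
def SaturatingR (H : TriSys α) (Rfam : Finset (Finset α)) (Wi : Finset α) : Prop :=
  ∃ f : Finset α → α, Set.InjOn f ↑Rfam ∧ ∀ R ∈ Rfam, f R ∈ Wi ∧ RAdj H R (f R)

/-- Matchability of an FR-partition. -/
def IsMatchable (H : TriSys α) (P : FRData α) : Prop :=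
  ∀ i : Fin 3, SaturatingR H P.Rfam (P.W ∩ H.cls i)

/-- The edge-home property: every edge is an `F`-edge or an `R`-edge. -/
def EdgeHome (H : TriSys α) (P : FRData α) : Prop :=
  ∀ e ∈ H.edges,
    (∃ A ∈ P.Ffam, evset e ⊆ A) ∨ (∃ B ∈ P.Rfam, 2 ≤ (evset e ∩ B).card)

/-- A home-base partition: a matchable FR-partition with the edge-home
property. -/
def IsHomeBasePartition (H : TriSys α) (P : FRData α) : Prop :=
  IsFRPartition H P ∧ IsMatchable H P ∧ EdgeHome H P

/-- A home-base hypergraph: one admitting a home-base partition. -/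
def IsHomeBase (H : TriSys α) : Prop :=
  ∃ P : FRData α, IsHomeBasePartition H P

/-- The neighborhood of a family `U` of `R`'s in the auxiliary bipartite
graph with `W`-side `Wi`. -/
def RNbhd (H : TriSys α) (Wi : Finset α) (U : Finset (Finset α)) : Finset α :=
  Wi.filter fun w => ∃ R ∈ U, RAdj H R w

/-- `C` is an essential subset of `Wi` in the auxiliary bipartite graph:
`C = N(U)` for some `U ⊆ Rfam` with `|U| = |C|`. -/
def EssentialSet (H : TriSys α) (Rfam : Finset (Finset α)) (Wi : Finset α)
    (C : Finset α) : Prop :=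
  ∃ U ⊆ Rfam, U.card = C.card ∧ RNbhd H Wi U = C

/-- `w` is a superfluous vertex of `Wi`: it lies in no essential subset
(equivalently, outside the maximal essential subset). -/
def Superfluous (H : TriSys α) (Rfam : Finset (Finset α)) (Wi : Finset α)
    (w : α) : Prop :=
  w ∈ Wi ∧ ∀ C, EssentialSet H Rfam Wi C → w ∉ C

/-- `w` is a superfluous `W`-vertex of the FR-partition `P` (in its class). -/
def SuperfluousVert (H : TriSys α) (P : FRData α) (w : α) : Prop :=
  ∃ i : Fin 3, Superfluous H P.Rfam (P.W ∩ H.cls i) w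

/-- `v` is an essential `W`-vertex of the FR-partition `P`. -/
def EssentialVertIn (H : TriSys α) (P : FRData α) (v : α) : Prop :=
  ∃ i : Fin 3, EssentialSet H P.Rfam (P.W ∩ H.cls i) {v}

/-- `v` is essential for `R`: it is the unique neighbor of `R` in some `B_i`. -/
def EssentialForIn (H : TriSys α) (P : FRData α) (R : Finset α) (v : α) : Prop :=
  ∃ i : Fin 3, RNbhd H (P.W ∩ H.cls i) {R} = {v}

/-- The neighborhood, inside vertex class `j`, of a set `X` of class-`k`
vertices in the link graph of `H` over the remaining vertex class. -/
def nbr (H : TriSys α) (j k : Fin 3) (X : Finset α) : Finset α :=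
  (H.cls j).filter fun v => ∃ e ∈ H.edges, ecoord e j = v ∧ ecoord e k ∈ X

/-- A cromulent triple `(Y1, Y2, X)` with `Y1 ⊆ V_i`, `Y2 ⊆ V_j`, `X ⊆ V_k`. -/
def IsCromulent (H : TriSys α) (i j k : Fin 3) (Y1 Y2 X : Finset α) : Prop :=
  i ≠ j ∧ i ≠ k ∧ j ≠ k ∧
  Y1.Nonempty ∧ Y2.Nonempty ∧ X.Nonempty ∧
  Y1 ⊆ H.cls i ∧ Y2 ⊆ H.cls j ∧ X ⊆ H.cls k ∧
  Y1.card = Y2.card ∧ Y1.card ≤ X.card ∧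
  nbr H j k X = Y2 ∧
  (∃ M : Finset (α × α × α), H.IsMatching M ∧ M.card = Y1.card ∧
    ∀ e ∈ M, evset e ⊆ Y1 ∪ Y2 ∪ X) ∧
  IsHomeBase (H.delete (Y1 ∪ Y2 ∪ X)) ∧
  (H.delete (Y1 ∪ Y2 ∪ X)).nu + Y1.card = H.nu ∧
  ∀ P : FRData α, IsHomeBasePartition (H.delete (Y1 ∪ Y2 ∪ X)) P →
    nbr H i k X ⊆ Y1 ∪ famUnion P.Rfam ∪ famUnion P.Ffam

/-- A perfectly cromulent triple: condition (5) is strengthened to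
`N_{Lk_{V_j}}(X) = Y1`. -/
def IsPerfCromulent (H : TriSys α) (i j k : Fin 3) (Y1 Y2 X : Finset α) : Prop :=
  i ≠ j ∧ i ≠ k ∧ j ≠ k ∧
  Y1.Nonempty ∧ Y2.Nonempty ∧ X.Nonempty ∧
  Y1 ⊆ H.cls i ∧ Y2 ⊆ H.cls j ∧ X ⊆ H.cls k ∧
  Y1.card = Y2.card ∧ Y1.card ≤ X.card ∧
  nbr H j k X = Y2 ∧
  (∃ M : Finset (α × α × α), H.IsMatching M ∧ M.card = Y1.card ∧
    ∀ e ∈ M, evset e ⊆ Y1 ∪ Y2 ∪ X) ∧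
  IsHomeBase (H.delete (Y1 ∪ Y2 ∪ X)) ∧
  (H.delete (Y1 ∪ Y2 ∪ X)).nu + Y1.card = H.nu ∧
  nbr H i k X = Y1

/-- The link graph of `H` over the class other than `j, k` has a perfect
matching, encoded as a bijection from class `j` onto class `k` realized by
edges of `H`. -/
def LinkPerfectMatching (H : TriSys α) (j k : Fin 3) : Prop :=
  ∃ f : α → α, Set.InjOn f ↑(H.cls j) ∧ (H.cls j).image f = H.cls k ∧
    ∀ v ∈ H.cls j, ∃ e ∈ H.edges, ecoord e j = v ∧ ecoord e k = f v

/-- A proper FR-partition: no `R ∈ 𝓡` together with an edge consisting of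
three `W`-vertices induces a truncated (multi-)Fano plane. -/
def IsProper (H : TriSys α) (P : FRData α) : Prop :=
  ¬ ∃ R ∈ P.Rfam, ∃ e ∈ H.edges, evset e ⊆ P.W ∧ IsMultiFano H (R ∪ evset e)

section MonsterHelpers

variable {α : Type u}

lemma cls_disjoint (H : TriSys α) {i j : Fin 3} (hij : i ≠ j) :
    Disjoint (H.cls i) (H.cls j) := by
  fin_cases i <;> fin_cases j <;> simp_all [TriSys.cls] <;>
    first
      | exact H.h12 | exact H.h13 | exact H.h23
      | exact H.h12.symm | exact H.h13.symm | exact H.h23.symm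

lemma mem_cls_unique (H : TriSys α) {v : α} {i j : Fin 3}
    (h1 : v ∈ H.cls i) (h2 : v ∈ H.cls j) : i = j := by
  by_contra hne
  exact Finset.disjoint_left.1 (cls_disjoint H hne) h1 h2

lemma coord_cls (H : TriSys α) {e : α × α × α} (he : e ∈ H.edges) :
    e.1 ∈ H.cls 0 ∧ e.2.1 ∈ H.cls 1 ∧ e.2.2 ∈ H.cls 2 := by
  refine ⟨?_, ?_, ?_⟩ <;> simp [TriSys.cls]
  · exact H.mem1 e he
  · exact H.mem2 e he
  · exact H.mem3 e he

lemma mem_evset_iff {e : α × α × α} {v : α} :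
    v ∈ evset e ↔ v = e.1 ∨ v = e.2.1 ∨ v = e.2.2 := by
  simp [evset]

lemma evset_mem_cls (H : TriSys α) {e : α × α × α} (he : e ∈ H.edges) {v : α}
    (hv : v ∈ evset e) : ∃ i, v ∈ H.cls i := by
  obtain ⟨c1, c2, c3⟩ := coord_cls H he
  rcases mem_evset_iff.1 hv with rfl | rfl | rfl
  · exact ⟨0, c1⟩
  · exact ⟨1, c2⟩
  · exact ⟨2, c3⟩

lemma evset_cls_unique (H : TriSys α) {e : α × α × α} (he : e ∈ H.edges)
    {v w : α} {i : Fin 3} (hv : v ∈ evset e) (hw : w ∈ evset e)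
    (hvi : v ∈ H.cls i) (hwi : w ∈ H.cls i) : v = w := by
  obtain ⟨c1, c2, c3⟩ := coord_cls H he
  rcases mem_evset_iff.1 hv with rfl | rfl | rfl <;>
    rcases mem_evset_iff.1 hw with rfl | rfl | rfl <;>
    first
      | rfl
      | exact absurd ((mem_cls_unique H hvi c1).symm.trans (mem_cls_unique H hwi c2)) (by decide)
      | exact absurd ((mem_cls_unique H hvi c1).symm.trans (mem_cls_unique H hwi c3)) (by decide)
      | exact absurd ((mem_cls_unique H hvi c2).symm.trans (mem_cls_unique H hwi c1)) (by decide)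
      | exact absurd ((mem_cls_unique H hvi c2).symm.trans (mem_cls_unique H hwi c3)) (by decide)
      | exact absurd ((mem_cls_unique H hvi c3).symm.trans (mem_cls_unique H hwi c1)) (by decide)
      | exact absurd ((mem_cls_unique H hvi c3).symm.trans (mem_cls_unique H hwi c2)) (by decide)

lemma evset_card (H : TriSys α) {e : α × α × α} (he : e ∈ H.edges) :
    (evset e).card = 3 := by
  have h12 : e.1 ≠ e.2.1 := fun h =>
    Finset.disjoint_left.1 H.h12 (H.mem1 e he) (h ▸ H.mem2 e he)
  have h13 : e.1 ≠ e.2.2 := fun h =>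
    Finset.disjoint_left.1 H.h13 (H.mem1 e he) (h ▸ H.mem3 e he)
  have h23 : e.2.1 ≠ e.2.2 := fun h =>
    Finset.disjoint_left.1 H.h23 (H.mem2 e he) (h ▸ H.mem3 e he)
  rw [evset, Finset.card_insert_of_notMem (by simp [h12, h13]),
    Finset.card_insert_of_notMem (by simp [h23]), Finset.card_singleton]

lemma matching_bdd (H : TriSys α) :
    BddAbove {n : ℕ | ∃ M : Finset (α × α × α), H.IsMatching M ∧ M.card = n} := by
  refine ⟨H.edges.toFinset.card, ?_⟩
  rintro n ⟨M, hM, rfl⟩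
  exact Finset.card_le_card fun e he => Multiset.mem_toFinset.2 (hM.1 e he)

lemma nu_delete_le (H : TriSys α) (S : Finset α) : (H.delete S).nu ≤ H.nu := by
  apply csSup_le_csSup (matching_bdd H)
  · refine ⟨0, ∅, ⟨?_, ?_⟩, rfl⟩ <;> simp
  · rintro n ⟨M, ⟨hM1, hM2⟩, rfl⟩
    exact ⟨M, ⟨fun e he => (Multiset.mem_filter.1 (hM1 e he)).1, hM2⟩, rfl⟩

lemma mem_delete_edges (H : TriSys α) {S : Finset α} {e : α × α × α}
    (he : e ∈ H.edges) (hd : Disjoint (evset e) S) : e ∈ (H.delete S).edges := by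
  refine Multiset.mem_filter.2 ⟨he, ?_, ?_, ?_⟩ <;>
    exact Finset.disjoint_left.1 hd (by simp [evset])

lemma nu_ge_of_system (H : TriSys α) (S : Finset α) (homes : Finset (Finset α))
    (ch : Finset α → α × α × α)
    (h1 : ∀ A ∈ homes, ch A ∈ H.edges)
    (h2 : ∀ A ∈ homes, Disjoint (evset (ch A)) S)
    (h3 : ∀ A ∈ homes, 2 ≤ (evset (ch A) ∩ A).card)
    (h4 : ∀ A ∈ homes, ∀ B ∈ homes, A ≠ B →
      Disjoint (evset (ch A)) (evset (ch B))) :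
    homes.card ≤ (H.delete S).nu := by
  have hinj : Set.InjOn ch ↑homes := by
    intro A hA B hB hAB
    by_contra hne
    have hd := h4 A hA B hB hne
    rw [hAB, disjoint_self] at hd
    have h3B := h3 B hB
    rw [hd] at h3B
    simp at h3B
  apply le_csSup (matching_bdd (H.delete S))
  refine ⟨homes.image ch, ⟨?_, ?_⟩, ?_⟩
  · intro e he
    obtain ⟨A, hA, rfl⟩ := Finset.mem_image.1 he
    exact mem_delete_edges H (h1 A hA) (h2 A hA)
  · intro e he f hf hef
    obtain ⟨A, hA, rfl⟩ := Finset.mem_image.1 (Finset.mem_coe.1 he)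
    obtain ⟨B, hB, rfl⟩ := Finset.mem_image.1 (Finset.mem_coe.1 hf)
    exact h4 A hA B hB fun h => hef (by rw [h])
  · rw [Finset.card_image_of_injOn hinj]

lemma fano_avoid (H : TriSys α) {F : Finset α} (hMF : IsMultiFano H F) {w : α}
    (hw : w ∈ F) : ∃ e ∈ H.edges, evset e ⊆ F ∧ w ∉ evset e := by
  obtain ⟨a, b, c, x, y, z, ha, hx, hb, hy, hc, hz, hax, hby, hcz, rfl, hind⟩ := hMF
  have key : ∀ e ∈ FanoEdges a b c x y z,
      e ∈ H.edges ∧ evset e ⊆ ({a, b, c, x, y, z} : Finset α) := by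
    intro e heF
    have h2 : e ∈ inducedEdges H {a, b, c, x, y, z} := hind ▸ heF
    rw [inducedEdges, Multiset.mem_toFinset, Multiset.mem_filter] at h2
    exact h2
  have d12 := fun {u v} (hu : u ∈ H.V1) (hv : v ∈ H.V2) (h : u = v) =>
    Finset.disjoint_left.1 H.h12 hu (h ▸ hv)
  have d13 := fun {u v} (hu : u ∈ H.V1) (hv : v ∈ H.V3) (h : u = v) =>
    Finset.disjoint_left.1 H.h13 hu (h ▸ hv)
  have d23 := fun {u v} (hu : u ∈ H.V2) (hv : v ∈ H.V3) (h : u = v) =>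
    Finset.disjoint_left.1 H.h23 hu (h ▸ hv)
  simp only [Finset.mem_insert, Finset.mem_singleton] at hw
  rcases hw with rfl | rfl | rfl | rfl | rfl | rfl
  · -- w = a : use (x, b, z)
    refine ⟨(x, b, z), (key _ (by simp [FanoEdges])).1, (key _ (by simp [FanoEdges])).2, ?_⟩
    rw [mem_evset_iff]
    push_neg
    exact ⟨hax, d12 ha hb, d13 ha hz⟩
  · -- w = b : use (a, y, z)
    refine ⟨(a, y, z), (key _ (by simp [FanoEdges])).1, (key _ (by simp [FanoEdges])).2, ?_⟩
    rw [mem_evset_iff]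
    push_neg
    exact ⟨fun h => d12 ha hb h.symm, hby, d23 hb hz⟩
  · -- w = c : use (a, y, z)
    refine ⟨(a, y, z), (key _ (by simp [FanoEdges])).1, (key _ (by simp [FanoEdges])).2, ?_⟩
    rw [mem_evset_iff]
    push_neg
    exact ⟨fun h => d13 ha hc h.symm, fun h => d23 hy hc h.symm, hcz⟩
  · -- w = x : use (a, b, c)
    refine ⟨(a, b, c), (key _ (by simp [FanoEdges])).1, (key _ (by simp [FanoEdges])).2, ?_⟩
    rw [mem_evset_iff]
    push_neg
    exact ⟨hax.symm, d12 hx hb, d13 hx hc⟩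
  · -- w = y : use (a, b, c)
    refine ⟨(a, b, c), (key _ (by simp [FanoEdges])).1, (key _ (by simp [FanoEdges])).2, ?_⟩
    rw [mem_evset_iff]
    push_neg
    exact ⟨fun h => d12 ha hy h.symm, hby.symm, d23 hy hc⟩
  · -- w = z : use (x, y, c)
    refine ⟨(x, y, c), (key _ (by simp [FanoEdges])).1, (key _ (by simp [FanoEdges])).2, ?_⟩
    rw [mem_evset_iff]
    push_neg
    exact ⟨fun h => d13 hx hz h.symm, fun h => d23 hy hz h.symm, hcz.symm⟩

end MonsterHelpers

/-- **The monster lemma.** Let `H` have a matchable FR-partition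
`(𝓕, 𝓡, W)` and let `a, b, c` lie in three different vertex classes.
If every `F ∈ 𝓕` has an `F`-edge avoiding `{a, b, c}` and every `R ∈ 𝓡`
has an `R`-edge avoiding `{a, b, c}`, then `ν(H − {a, b, c}) = ν(H)`. -/
theorem monster_lemma (H : TriSys α) (P : FRData α)
    (hFR : IsFRPartition H P) (hM : IsMatchable H P)
    (a b c : α)
    (habc : ∃ i j k : Fin 3, i ≠ j ∧ i ≠ k ∧ j ≠ k ∧
      a ∈ H.cls i ∧ b ∈ H.cls j ∧ c ∈ H.cls k)
    (hF : ∀ A ∈ P.Ffam, ∃ e ∈ H.edges, evset e ⊆ A ∧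
      Disjoint (evset e) ({a, b, c} : Finset α))
    (hR : ∀ B ∈ P.Rfam, ∃ e ∈ H.edges, 2 ≤ (evset e ∩ B).card ∧
      Disjoint (evset e) ({a, b, c} : Finset α)) :
    (H.delete {a, b, c}).nu = H.nu := by
  obtain ⟨i0, j0, k0, hij, hik, hjk, hai, hbj, hck⟩ := habc
  obtain ⟨hdF, hdR, hdFR, hFW, hRW, hcover, hFanoP, hRtri, hcard⟩ := hFR
  set S : Finset α := {a, b, c} with hSdef
  have hM' : ∀ i : Fin 3, ∃ g : Finset α → α, Set.InjOn g ↑P.Rfam ∧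
      ∀ R ∈ P.Rfam, g R ∈ P.W ∩ H.cls i ∧ RAdj H R (g R) := hM
  choose f finj fprop using hM'
  have fW : ∀ (i : Fin 3) (R : Finset α), R ∈ P.Rfam → f i R ∈ P.W :=
    fun i R h => (Finset.mem_inter.1 ((fprop i R h).1)).1
  have fcls : ∀ (i : Fin 3) (R : Finset α), R ∈ P.Rfam → f i R ∈ H.cls i :=
    fun i R h => (Finset.mem_inter.1 ((fprop i R h).1)).2
  have hRWv : ∀ R ∈ P.Rfam, ∀ v ∈ R, v ∉ P.W :=
    fun R h v hv hw => Finset.disjoint_left.1 (hRW R h) hv hw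
  have hfnR : ∀ (i : Fin 3) (R : Finset α), R ∈ P.Rfam → f i R ∉ R :=
    fun i R h hin => hRWv R h _ hin (fW i R h)
  have hAdj : ∀ (i : Fin 3) (R : Finset α), ∃ e : α × α × α, R ∈ P.Rfam →
      e ∈ H.edges ∧ f i R ∈ evset e ∧ 2 ≤ (evset e ∩ R).card := by
    intro i R
    by_cases h : R ∈ P.Rfam
    · obtain ⟨e, he, h1, h2⟩ := (fprop i R h).2
      exact ⟨e, fun _ => ⟨he, h1, h2⟩⟩
    · exact ⟨(a, a, a), fun hh => absurd hh h⟩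
  choose E hE using hAdj
  have hEstruct : ∀ (i : Fin 3) (R : Finset α), R ∈ P.Rfam → ∀ v ∈ evset (E i R),
      v = f i R ∨ (v ∈ R ∧ v ∉ H.cls i) := by
    intro i R h v hv
    obtain ⟨he, hfe, h2⟩ := hE i R h
    by_cases hvf : v = f i R
    · exact Or.inl hvf
    · have hsub : evset (E i R) ∩ R ⊆ evset (E i R) \ {f i R} := by
        intro u hu
        rw [Finset.mem_inter] at hu
        refine Finset.mem_sdiff.2 ⟨hu.1, ?_⟩
        simp only [Finset.mem_singleton]
        intro huf
        exact hfnR i R h (by rw [← huf]; exact hu.2)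
      have hcards : (evset (E i R) \ {f i R}).card = 2 := by
        rw [Finset.card_sdiff_of_subset (by simp [hfe]), evset_card H he, Finset.card_singleton]
      have heq : evset (E i R) ∩ R = evset (E i R) \ {f i R} :=
        Finset.eq_of_subset_of_card_le hsub (by rw [hcards]; exact h2)
      have hvR : v ∈ R := by
        have hmem : v ∈ evset (E i R) \ {f i R} :=
          Finset.mem_sdiff.2 ⟨hv, by simpa using hvf⟩
        rw [← heq] at hmem
        exact (Finset.mem_inter.1 hmem).2
      refine Or.inr ⟨hvR, fun hvc => hvf ?_⟩
      exact evset_cls_unique H he hv hfe hvc (fcls i R h)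
  have hRcard : ∀ R ∈ P.Rfam, R.card = 3 := by
    intro R h
    obtain ⟨r1, h1, r2, h2, r3, h3, rfl⟩ := hRtri R h
    have d12 : r1 ≠ r2 := fun hx => Finset.disjoint_left.1 H.h12 h1 (hx ▸ h2)
    have d13 : r1 ≠ r3 := fun hx => Finset.disjoint_left.1 H.h13 h1 (hx ▸ h3)
    have d23 : r2 ≠ r3 := fun hx => Finset.disjoint_left.1 H.h23 h2 (hx ▸ h3)
    rw [Finset.card_insert_of_notMem (by simp [d12, d13]),
      Finset.card_insert_of_notMem (by simp [d23]), Finset.card_singleton]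
  have hRS1 : ∀ R ∈ P.Rfam, (R ∩ S).card ≤ 1 := by
    intro R h
    obtain ⟨e, he, h2, hdisj⟩ := hR R h
    have hd : Disjoint (evset e ∩ R) (R ∩ S) := by
      rw [Finset.disjoint_left]
      intro v hv1 hv2
      exact Finset.disjoint_left.1 hdisj (Finset.mem_inter.1 hv1).1
        (Finset.mem_inter.1 hv2).2
    have hsub : (evset e ∩ R) ∪ (R ∩ S) ⊆ R :=
      Finset.union_subset Finset.inter_subset_right Finset.inter_subset_left
    have hle := Finset.card_le_card hsub
    rw [Finset.card_union_of_disjoint hd, hRcard R h] at hle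
    omega
  have hSclsEx : ∀ s ∈ S, ∃ t, s ∈ H.cls t := by
    intro s hs
    rw [hSdef] at hs
    simp only [Finset.mem_insert, Finset.mem_singleton] at hs
    rcases hs with rfl | rfl | rfl
    exacts [⟨i0, hai⟩, ⟨j0, hbj⟩, ⟨k0, hck⟩]
  have hSuniq : ∀ s ∈ S, ∀ s' ∈ S, ∀ t : Fin 3, s ∈ H.cls t → s' ∈ H.cls t →
      s = s' := by
    intro s hs s' hs' t h1 h2
    rw [hSdef] at hs hs'
    simp only [Finset.mem_insert, Finset.mem_singleton] at hs hs'
    rcases hs with rfl | rfl | rfl <;> rcases hs' with rfl | rfl | rfl <;>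
      first
        | rfl
        | exact absurd ((mem_cls_unique H h1 hai).symm.trans (mem_cls_unique H h2 hbj)) hij
        | exact absurd ((mem_cls_unique H h1 hai).symm.trans (mem_cls_unique H h2 hck)) hik
        | exact absurd ((mem_cls_unique H h1 hbj).symm.trans (mem_cls_unique H h2 hck)) hjk
        | exact absurd ((mem_cls_unique H h1 hbj).symm.trans (mem_cls_unique H h2 hai)) (Ne.symm hij)
        | exact absurd ((mem_cls_unique H h1 hck).symm.trans (mem_cls_unique H h2 hai)) (Ne.symm hik)
        | exact absurd ((mem_cls_unique H h1 hck).symm.trans (mem_cls_unique H h2 hbj)) (Ne.symm hjk)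
  have hGoodEdge : ∀ (i : Fin 3) (R : Finset α), R ∈ P.Rfam → f i R ∉ S →
      R ∩ S ⊆ H.cls i → Disjoint (evset (E i R)) S := by
    intro i R h hg1 hg2
    rw [Finset.disjoint_left]
    intro v hv hvS
    rcases hEstruct i R h v hv with rfl | ⟨hvR, hvc⟩
    · exact hg1 hvS
    · exact hvc (hg2 (Finset.mem_inter.2 ⟨hvR, hvS⟩))
  have hFRdisj : Disjoint P.Ffam P.Rfam := by
    rw [Finset.disjoint_left]
    intro A h1 h2
    obtain ⟨r1, hr1, r2, hr2, r3, hr3, hAeq⟩ := hRtri A h2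
    have hAA : Disjoint A A := hdFR A h1 A h2
    rw [disjoint_self] at hAA
    rw [hAA] at hAeq
    exact absurd hAeq.symm (by simp)
  have hFch : ∀ A : Finset α, ∃ e : α × α × α, A ∈ P.Ffam →
      e ∈ H.edges ∧ evset e ⊆ A ∧ Disjoint (evset e) S := by
    intro A
    by_cases h : A ∈ P.Ffam
    · obtain ⟨e, he, h1, h2⟩ := hF A h
      exact ⟨e, fun _ => ⟨he, h1, h2⟩⟩
    · exact ⟨(a, a, a), fun hh => absurd hh h⟩
  choose gF hgF using hFch
  have hFRdisjE : ∀ A ∈ P.Ffam, ∀ (e : α × α × α), evset e ⊆ A →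
      ∀ (i : Fin 3) (R : Finset α), R ∈ P.Rfam →
      Disjoint (evset e) (evset (E i R)) := by
    intro A hA e hsub i R h
    rw [Finset.disjoint_left]
    intro v hv1 hv2
    have hvA := hsub hv1
    rcases hEstruct i R h v hv2 with hvf | ⟨hvR, _⟩
    · exact Finset.disjoint_left.1 (hFW A hA) hvA (by rw [hvf]; exact fW i R h)
    · exact Finset.disjoint_left.1 (hdFR A hA R h) hvA hvR
  have hRRdisjE : ∀ (i : Fin 3) (R : Finset α), R ∈ P.Rfam →
      ∀ (j : Fin 3) (R' : Finset α), R' ∈ P.Rfam → R ≠ R' →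
      Disjoint (evset (E i R)) (evset (E j R')) := by
    intro i R h j R' h' hne
    rw [Finset.disjoint_left]
    intro v hv1 hv2
    rcases hEstruct i R h v hv1 with hvf | ⟨hvR, _⟩
    · rcases hEstruct j R' h' v hv2 with hvf' | ⟨hvR', _⟩
      · have hji : i = j := mem_cls_unique H
          (show v ∈ H.cls i by rw [hvf]; exact fcls i R h)
          (show v ∈ H.cls j by rw [hvf']; exact fcls j R' h')
        subst hji
        exact hne (finj i (Finset.mem_coe.2 h) (Finset.mem_coe.2 h')
          (hvf.symm.trans hvf'))
      · exact hRWv R' h' v hvR' (by rw [hvf]; exact fW i R h)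
    · rcases hEstruct j R' h' v hv2 with hvf' | ⟨hvR', _⟩
      · exact hRWv R h v hvR (by rw [hvf']; exact fW j R' h')
      · exact Finset.disjoint_left.1 (hdR R h R' h' hne) hvR hvR'
  refine le_antisymm (nu_delete_le H S) ?_
  rw [← hcard, ← Finset.card_union_of_disjoint hFRdisj]
  by_cases hbad : ∃ R₀ ∈ P.Rfam, ∀ i : Fin 3, f i R₀ ∈ S
  · -- Case B
    obtain ⟨R₀, hR₀, hfbad⟩ := hbad
    have hSW : ∀ s ∈ S, s ∈ P.W := by
      intro s hs
      obtain ⟨t, hst⟩ := hSclsEx s hs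
      have heq : s = f t R₀ := hSuniq s hs _ (hfbad t) t hst (fcls t R₀ hR₀)
      rw [heq]; exact fW t R₀ hR₀
    have hRSempty : ∀ R ∈ P.Rfam, R ∩ S = ∅ := by
      intro R h
      rw [Finset.eq_empty_iff_forall_notMem]
      intro v hv
      rw [Finset.mem_inter] at hv
      exact hRWv R h v hv.1 (hSW v hv.2)
    have hfS : ∀ (i : Fin 3) (R : Finset α), R ∈ P.Rfam → R ≠ R₀ → f i R ∉ S := by
      intro i R h hne hin
      have heq : f i R = f i R₀ := hSuniq _ hin _ (hfbad i) i (fcls i R h) (fcls i R₀ hR₀)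
      exact hne (finj i (Finset.mem_coe.2 h) (Finset.mem_coe.2 hR₀) heq)
    obtain ⟨e₀, he₀, he₀2, he₀S⟩ := hR R₀ hR₀
    have hDcard : (evset e₀ \ R₀).card ≤ 1 := by
      have h3 := evset_card H he₀
      have h4 := Finset.card_inter_add_card_sdiff (evset e₀) R₀
      omega
    have hRch : ∀ R : Finset α, ∃ i : Fin 3, R ∈ P.Rfam → R ≠ R₀ →
        Disjoint (evset (E i R)) S ∧ Disjoint (evset (E i R)) (evset e₀) := by
      intro R
      by_cases h' : R ∈ P.Rfam ∧ R ≠ R₀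
      swap
      · exact ⟨0, fun h1 h2 => absurd ⟨h1, h2⟩ h'⟩
      obtain ⟨h, hne⟩ := h'
      have main : ∃ i : Fin 3, ∀ v ∈ evset (E i R), v ∉ evset e₀ \ R₀ := by
        by_cases hD : evset e₀ \ R₀ = ∅
        · exact ⟨0, fun v _ hv => by rw [hD] at hv; exact absurd hv (Finset.notMem_empty v)⟩
        · obtain ⟨w, hwD⟩ := Finset.nonempty_iff_ne_empty.2 hD
          have hDw : ∀ v ∈ evset e₀ \ R₀, v = w :=
            fun v hv => Finset.card_le_one.1 hDcard v hv w hwD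
          by_cases hwR : w ∈ R
          · obtain ⟨t, hwt⟩ := evset_mem_cls H he₀ (Finset.mem_sdiff.1 hwD).1
            refine ⟨t, fun v hv hvD => ?_⟩
            have hvw := hDw v hvD
            subst hvw
            rcases hEstruct t R h v hv with hvf | ⟨_, hnc⟩
            · exact hRWv R h _ hwR (by rw [hvf]; exact fW t R h)
            · exact hnc hwt
          · have hex : ∃ i : Fin 3, f i R ≠ w := by
              by_cases h0 : f 0 R = w
              · refine ⟨1, fun h1 => ?_⟩
                have heq : f 1 R = f 0 R := h1.trans h0.symm
                exact absurd (mem_cls_unique H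
                  (show f 1 R ∈ H.cls 0 by rw [heq]; exact fcls 0 R h)
                  (fcls 1 R h)) (by decide)
              · exact ⟨0, h0⟩
            obtain ⟨i, hi⟩ := hex
            refine ⟨i, fun v hv hvD => ?_⟩
            have hvw := hDw v hvD
            rcases hEstruct i R h v hv with hvf | ⟨hvR, _⟩
            · exact hi (hvf.symm.trans hvw)
            · exact hwR (hvw ▸ hvR)
      obtain ⟨i, hmain⟩ := main
      refine ⟨i, fun _ _ => ⟨hGoodEdge i R h (hfS i R h hne)
        (by rw [hRSempty R h]; exact Finset.empty_subset _), ?_⟩⟩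
      rw [Finset.disjoint_left]
      intro v hv hv0
      by_cases hvR₀ : v ∈ R₀
      · rcases hEstruct i R h v hv with hvf | ⟨hvR, _⟩
        · exact hRWv R₀ hR₀ v hvR₀ (by rw [hvf]; exact fW i R h)
        · exact Finset.disjoint_left.1 (hdR R h R₀ hR₀ hne) hvR hvR₀
      · exact hmain v hv (Finset.mem_sdiff.2 ⟨hv0, hvR₀⟩)
    choose cB hcB using hRch
    have hFch2 : ∀ A : Finset α, ∃ e : α × α × α, A ∈ P.Ffam →
        e ∈ H.edges ∧ evset e ⊆ A ∧ Disjoint (evset e) S ∧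
        Disjoint (evset e) (evset e₀) := by
      intro A
      by_cases hA : A ∈ P.Ffam
      swap
      · exact ⟨(a, a, a), fun hh => absurd hh hA⟩
      have hAR₀ : ∀ v ∈ A, v ∉ R₀ := fun v hv hv0 =>
        Finset.disjoint_left.1 (hdFR A hA R₀ hR₀) hv hv0
      by_cases hcap : ∀ v ∈ evset e₀, v ∉ A
      · obtain ⟨e, he, h1, h2⟩ := hF A hA
        refine ⟨e, fun _ => ⟨he, h1, h2, ?_⟩⟩
        rw [Finset.disjoint_left]
        intro v hv hv0
        exact hcap v hv0 (h1 hv)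
      · push_neg at hcap
        obtain ⟨w, hw0, hwA⟩ := hcap
        obtain ⟨e, he, h1, h2⟩ := fano_avoid H (hFanoP A hA) hwA
        refine ⟨e, fun _ => ⟨he, h1, ?_, ?_⟩⟩
        · rw [Finset.disjoint_left]
          intro v hv hvS
          exact Finset.disjoint_left.1 (hFW A hA) (h1 hv) (hSW v hvS)
        · rw [Finset.disjoint_left]
          intro v hv hv0
          have hvD : v ∈ evset e₀ \ R₀ :=
            Finset.mem_sdiff.2 ⟨hv0, fun hc => hAR₀ v (h1 hv) hc⟩
          have hwD : w ∈ evset e₀ \ R₀ := Finset.mem_sdiff.2 ⟨hw0, hAR₀ w hwA⟩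
          have hvw : v = w := Finset.card_le_one.1 hDcard v hvD w hwD
          rw [hvw] at hv
          exact h2 hv
    choose gF2 hgF2 using hFch2
    set ch : Finset α → α × α × α := fun A =>
      if A ∈ P.Ffam then gF2 A else if A = R₀ then e₀ else E (cB A) A with hch
    have chF : ∀ A ∈ P.Ffam, ch A = gF2 A := by
      intro A h; simp only [hch]; rw [if_pos h]
    have chR0 : ch R₀ = e₀ := by
      have hnF : R₀ ∉ P.Ffam := Finset.disjoint_right.1 hFRdisj hR₀
      simp only [hch]; rw [if_neg hnF]; simp
    have chRB : ∀ R ∈ P.Rfam, R ≠ R₀ → ch R = E (cB R) R := by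
      intro R h hne
      have hnF : R ∉ P.Ffam := Finset.disjoint_right.1 hFRdisj h
      simp only [hch]; rw [if_neg hnF, if_neg hne]
    apply nu_ge_of_system H S (P.Ffam ∪ P.Rfam) ch
    · intro A hA
      rcases Finset.mem_union.1 hA with h | h
      · rw [chF A h]; exact (hgF2 A h).1
      · by_cases hne : A = R₀
        · subst hne; rw [chR0]; exact he₀
        · rw [chRB A h hne]; exact (hE (cB A) A h).1
    · intro A hA
      rcases Finset.mem_union.1 hA with h | h
      · rw [chF A h]; exact (hgF2 A h).2.2.1
      · by_cases hne : A = R₀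
        · subst hne; rw [chR0]; exact he₀S
        · rw [chRB A h hne]; exact (hcB A h hne).1
    · intro A hA
      rcases Finset.mem_union.1 hA with h | h
      · rw [chF A h]
        have heq : evset (gF2 A) ∩ A = evset (gF2 A) :=
          Finset.inter_eq_left.2 (hgF2 A h).2.1
        rw [heq, evset_card H (hgF2 A h).1]; omega
      · by_cases hne : A = R₀
        · subst hne; rw [chR0]; exact he₀2
        · rw [chRB A h hne]; exact (hE (cB A) A h).2.2
    · intro A hA B hB hne
      rcases Finset.mem_union.1 hA with h1 | h1 <;> rcases Finset.mem_union.1 hB with h2 | h2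
      · rw [chF A h1, chF B h2]
        exact (hdF A h1 B h2 hne).mono (hgF2 A h1).2.1 (hgF2 B h2).2.1
      · rw [chF A h1]
        by_cases hB0 : B = R₀
        · subst hB0; rw [chR0]; exact (hgF2 A h1).2.2.2
        · rw [chRB B h2 hB0]; exact hFRdisjE A h1 _ (hgF2 A h1).2.1 (cB B) B h2
      · rw [chF B h2]
        by_cases hA0 : A = R₀
        · subst hA0; rw [chR0]; exact (hgF2 B h2).2.2.2.symm
        · rw [chRB A h1 hA0]
          exact (hFRdisjE B h2 _ (hgF2 B h2).2.1 (cB A) A h1).symm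
      · by_cases hA0 : A = R₀ <;> by_cases hB0 : B = R₀
        · exact absurd (hA0.trans hB0.symm) hne
        · subst hA0; rw [chR0, chRB B h2 hB0]
          exact ((hcB B h2 hB0).2).symm
        · subst hB0; rw [chR0, chRB A h1 hA0]
          exact (hcB A h1 hA0).2
        · rw [chRB A h1 hA0, chRB B h2 hB0]
          exact hRRdisjE (cB A) A h1 (cB B) B h2 hne
  · -- Case A
    push_neg at hbad
    have hGoodExists : ∀ R : Finset α, ∃ i : Fin 3, R ∈ P.Rfam →
        f i R ∉ S ∧ R ∩ S ⊆ H.cls i := by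
      intro R
      by_cases h : R ∈ P.Rfam
      swap
      · exact ⟨0, fun hh => absurd hh h⟩
      by_cases hRS : R ∩ S = ∅
      · obtain ⟨i, hi⟩ := hbad R h
        exact ⟨i, fun _ => ⟨hi, by rw [hRS]; exact Finset.empty_subset _⟩⟩
      · obtain ⟨s, hs⟩ := Finset.nonempty_iff_ne_empty.2 hRS
        rw [Finset.mem_inter] at hs
        obtain ⟨t, hst⟩ := hSclsEx s hs.2
        refine ⟨t, fun _ => ⟨?_, ?_⟩⟩
        · intro hfSmem
          have heq : s = f t R := hSuniq s hs.2 _ hfSmem t hst (fcls t R h)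
          exact hRWv R h s hs.1 (by rw [heq]; exact fW t R h)
        · intro v hv
          have hveq : v = s :=
            Finset.card_le_one.1 (hRS1 R h) v hv s (Finset.mem_inter.2 hs)
          rw [hveq]; exact hst
    choose cA hcA using hGoodExists
    set ch : Finset α → α × α × α := fun A =>
      if A ∈ P.Ffam then gF A else E (cA A) A with hch
    have chF : ∀ A ∈ P.Ffam, ch A = gF A := by
      intro A h; simp only [hch]; rw [if_pos h]
    have chRA : ∀ R ∈ P.Rfam, ch R = E (cA R) R := by
      intro R h
      have hnF : R ∉ P.Ffam := Finset.disjoint_right.1 hFRdisj h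
      simp only [hch]; rw [if_neg hnF]
    apply nu_ge_of_system H S (P.Ffam ∪ P.Rfam) ch
    · intro A hA
      rcases Finset.mem_union.1 hA with h | h
      · rw [chF A h]; exact (hgF A h).1
      · rw [chRA A h]; exact (hE (cA A) A h).1
    · intro A hA
      rcases Finset.mem_union.1 hA with h | h
      · rw [chF A h]; exact (hgF A h).2.2
      · rw [chRA A h]
        exact hGoodEdge (cA A) A h (hcA A h).1 (hcA A h).2
    · intro A hA
      rcases Finset.mem_union.1 hA with h | h
      · rw [chF A h]
        have heq : evset (gF A) ∩ A = evset (gF A) :=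
          Finset.inter_eq_left.2 (hgF A h).2.1
        rw [heq, evset_card H (hgF A h).1]; omega
      · rw [chRA A h]; exact (hE (cA A) A h).2.2
    · intro A hA B hB hne
      rcases Finset.mem_union.1 hA with h1 | h1 <;> rcases Finset.mem_union.1 hB with h2 | h2
      · rw [chF A h1, chF B h2]
        exact (hdF A h1 B h2 hne).mono (hgF A h1).2.1 (hgF B h2).2.1
      · rw [chF A h1, chRA B h2]
        exact hFRdisjE A h1 _ (hgF A h1).2.1 (cA B) B h2
      · rw [chF B h2, chRA A h1]
        exact (hFRdisjE B h2 _ (hgF B h2).2.1 (cA A) A h1).symm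
      · rw [chRA A h1, chRA B h2]
        exact hRRdisjE (cA A) A h1 (cA B) B h2 hne
end
end
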